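/- Fix real numbers g > 0 and s ≥ 0 and define, for 0 < u, v < 1, ρ*(u,v) = [2(u∧v)²(1−(u∨v))²·g + (u∧v)(1−(u∨v))(1−2u)(1−2v)·s] / (σ*(u)σ*(v)), where σ*(x) = √(2x²(1−x)²·g + x(1−x)(1−2x)²·s). Then for each fixed v ∈ (0,1), the one-sided first derivatives of u ↦ ρ*(u,v) at u = v satisfy lim_{u↗v} ∂ρ*(u,v)/∂u = − lim_{u↘v} ∂ρ*(u,v)/∂u; that is, the left derivative at the diagonal equals the negative of the right derivative. -/

import Mathlib

open Filter Topology

namespace GraphCP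

/-- `σ*(x) = √(2x²(1−x)²·g + x(1−x)(1−2x)²·s)`. -/
noncomputable def sigmaStar (g s x : ℝ) : ℝ :=
  Real.sqrt (2 * x ^ 2 * (1 - x) ^ 2 * g + x * (1 - x) * (1 - 2 * x) ^ 2 * s)

/-- `ρ*(u,v)`, the covariance function of the limiting Gaussian process of the
single change-point scan statistic. -/
noncomputable def rhoStar (g s u v : ℝ) : ℝ :=
  (2 * (min u v) ^ 2 * (1 - max u v) ^ 2 * g +
      (min u v) * (1 - max u v) * (1 - 2 * u) * (1 - 2 * v) * s) /
    (sigmaStar g s u * sigmaStar g s v)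

/- Auxiliary definitions -/

noncomputable def Pf (g s x : ℝ) : ℝ :=
  2 * x ^ 2 * (1 - x) ^ 2 * g + x * (1 - x) * (1 - 2 * x) ^ 2 * s

noncomputable def Pd (g s x : ℝ) : ℝ :=
  4 * x * (1 - x) * (1 - 2 * x) * g + (1 - 2 * x) * (8 * x ^ 2 - 8 * x + 1) * s

noncomputable def Nl (g s v u : ℝ) : ℝ :=
  2 * u ^ 2 * (1 - v) ^ 2 * g + u * (1 - v) * (1 - 2 * u) * (1 - 2 * v) * s

noncomputable def Nld (g s v u : ℝ) : ℝ :=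
  4 * u * (1 - v) ^ 2 * g + (1 - v) * (1 - 4 * u) * (1 - 2 * v) * s

noncomputable def Nr (g s v u : ℝ) : ℝ :=
  2 * v ^ 2 * (1 - u) ^ 2 * g + v * (1 - u) * (1 - 2 * u) * (1 - 2 * v) * s

noncomputable def Nrd (g s v u : ℝ) : ℝ :=
  -(4 * v ^ 2 * (1 - u) * g) + v * (4 * u - 3) * (1 - 2 * v) * s

noncomputable def Dgen (g s v : ℝ) (N Nd : ℝ → ℝ) (u : ℝ) : ℝ :=
  (Nd u * (Real.sqrt (Pf g s u) * Real.sqrt (Pf g s v)) -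
      N u * (Pd g s u / (2 * Real.sqrt (Pf g s u)) * Real.sqrt (Pf g s v))) /
    (Real.sqrt (Pf g s u) * Real.sqrt (Pf g s v)) ^ 2

lemma Pf_pos {g s : ℝ} (hg : 0 < g) (hs : 0 ≤ s) {x : ℝ} (h0 : 0 < x) (h1 : x < 1) :
    0 < Pf g s x := by
  have h1' : 0 < 1 - x := by linarith
  have hA : 0 < 2 * x ^ 2 * (1 - x) ^ 2 * g :=
    mul_pos (mul_pos (mul_pos two_pos (pow_pos h0 2)) (pow_pos h1' 2)) hg
  have hB : 0 ≤ x * (1 - x) * (1 - 2 * x) ^ 2 * s :=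
    mul_nonneg (mul_nonneg (mul_nonneg h0.le h1'.le) (sq_nonneg _)) hs
  unfold Pf; linarith

lemma hasDerivAt_Pf (g s x : ℝ) : HasDerivAt (Pf g s) (Pd g s x) x := by
  have h1x : HasDerivAt (fun y : ℝ => 1 - y) (-1) x := (hasDerivAt_id x).const_sub 1
  have h2x : HasDerivAt (fun y : ℝ => 1 - 2 * y) (-2) x := by
    simpa using ((hasDerivAt_id x).const_mul 2).const_sub 1
  have hsq : HasDerivAt (fun y : ℝ => y ^ 2) (2 * x) x := by
    simpa using hasDerivAt_pow 2 x
  have hA : HasDerivAt (fun y : ℝ => 2 * y ^ 2 * (1 - y) ^ 2 * g)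
      ((2 * (2 * x) * (1 - x) ^ 2 + 2 * x ^ 2 * (2 * (1 - x) * (-1))) * g) x := by
    have := ((hsq.const_mul 2).mul (by simpa using h1x.fun_pow 2)).mul_const g
    exact this.congr_deriv (by ring)
  have hB : HasDerivAt (fun y : ℝ => y * (1 - y) * (1 - 2 * y) ^ 2 * s)
      (((1 * (1 - x) + x * (-1)) * (1 - 2 * x) ^ 2 +
        x * (1 - x) * (2 * (1 - 2 * x) * (-2))) * s) x := by
    have := (((hasDerivAt_id x).mul h1x).mul (by simpa using h2x.fun_pow 2)).mul_const s
    exact this.congr_deriv (by simp only [id_eq, Pi.mul_apply]; ring)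
  have := hA.add hB
  exact this.congr_deriv (by unfold Pd; ring)

lemma hasDerivAt_Nl (g s v u : ℝ) : HasDerivAt (Nl g s v) (Nld g s v u) u := by
  have h2x : HasDerivAt (fun y : ℝ => 1 - 2 * y) (-2) u := by
    simpa using ((hasDerivAt_id u).const_mul 2).const_sub 1
  have hsq : HasDerivAt (fun y : ℝ => y ^ 2) (2 * u) u := by
    simpa using hasDerivAt_pow 2 u
  have hA : HasDerivAt (fun y : ℝ => 2 * y ^ 2 * (1 - v) ^ 2 * g)
      (2 * (2 * u) * (1 - v) ^ 2 * g) u := ((hsq.const_mul 2).mul_const _).mul_const g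
  have hB : HasDerivAt (fun y : ℝ => y * (1 - v) * (1 - 2 * y) * (1 - 2 * v) * s)
      (((1 - v) * (1 - 2 * u) + u * (1 - v) * (-2)) * (1 - 2 * v) * s) u := by
    have := ((((hasDerivAt_id u).mul_const (1 - v)).mul h2x).mul_const (1 - 2 * v)).mul_const s
    exact this.congr_deriv (by simp only [id_eq]; ring)
  have := hA.add hB
  exact this.congr_deriv (by unfold Nld; ring)

lemma hasDerivAt_Nr (g s v u : ℝ) : HasDerivAt (Nr g s v) (Nrd g s v u) u := by
  have h1x : HasDerivAt (fun y : ℝ => 1 - y) (-1) u := (hasDerivAt_id u).const_sub 1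
  have h2x : HasDerivAt (fun y : ℝ => 1 - 2 * y) (-2) u := by
    simpa using ((hasDerivAt_id u).const_mul 2).const_sub 1
  have hA : HasDerivAt (fun y : ℝ => 2 * v ^ 2 * (1 - y) ^ 2 * g)
      (2 * v ^ 2 * (2 * (1 - u) * (-1)) * g) u := by
    have := ((by simpa using h1x.fun_pow 2 : HasDerivAt (fun y : ℝ => (1 - y) ^ 2)
      (2 * (1 - u) * (-1)) u).const_mul (2 * v ^ 2)).mul_const g
    exact this
  have hB : HasDerivAt (fun y : ℝ => v * (1 - y) * (1 - 2 * y) * (1 - 2 * v) * s)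
      (((v * (-1)) * (1 - 2 * u) + v * (1 - u) * (-2)) * (1 - 2 * v) * s) u := by
    exact (((h1x.const_mul v).mul h2x).mul_const (1 - 2 * v)).mul_const s
  have := hA.add hB
  exact this.congr_deriv (by unfold Nrd; ring)

lemma hasDerivAt_gen (g s v : ℝ) {u : ℝ} (hu : 0 < Pf g s u) (hv : 0 < Pf g s v)
    {N Nd : ℝ → ℝ} (hN : HasDerivAt N (Nd u) u) :
    HasDerivAt (fun u' => N u' / (Real.sqrt (Pf g s u') * Real.sqrt (Pf g s v)))
      (Dgen g s v N Nd u) u := by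
  have hsqrt := (hasDerivAt_Pf g s u).sqrt hu.ne'
  have hden := hsqrt.mul_const (Real.sqrt (Pf g s v))
  have hne : Real.sqrt (Pf g s u) * Real.sqrt (Pf g s v) ≠ 0 :=
    mul_ne_zero (Real.sqrt_pos.2 hu).ne' (Real.sqrt_pos.2 hv).ne'
  exact hN.div hden hne

lemma continuousAt_Dgen (g s v : ℝ) (hv : 0 < Pf g s v) {N Nd : ℝ → ℝ}
    (hN : ContinuousAt N v) (hNd : ContinuousAt Nd v) :
    ContinuousAt (Dgen g s v N Nd) v := by
  have hPf : Continuous (Pf g s) := by unfold Pf; continuity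
  have hsq : ContinuousAt (fun u => Real.sqrt (Pf g s u)) v :=
    (Real.continuous_sqrt.comp hPf).continuousAt
  have hsqv : Real.sqrt (Pf g s v) ≠ 0 := (Real.sqrt_pos.2 hv).ne'
  have hPd : ContinuousAt (Pd g s) v := by
    have : Continuous (Pd g s) := by unfold Pd; continuity
    exact this.continuousAt
  have hdenom : ContinuousAt (fun u => Real.sqrt (Pf g s u) * Real.sqrt (Pf g s v)) v :=
    hsq.mul continuousAt_const
  unfold Dgen
  apply ContinuousAt.div
  · exact (hNd.mul hdenom).sub
      (hN.mul ((hPd.div (continuousAt_const.mul hsq) (by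
        simpa using mul_ne_zero (two_ne_zero) hsqv)).mul continuousAt_const))
  · exact hdenom.pow 2
  · exact pow_ne_zero 2 (mul_ne_zero hsqv hsqv)

lemma Dgen_neg (g s v : ℝ) (hv : 0 < Pf g s v) :
    Dgen g s v (Nr g s v) (Nrd g s v) v = -Dgen g s v (Nl g s v) (Nld g s v) v := by
  have hq0 : 0 < Real.sqrt (Pf g s v) := Real.sqrt_pos.2 hv
  have hqq : Real.sqrt (Pf g s v) * Real.sqrt (Pf g s v) = Pf g s v :=
    Real.mul_self_sqrt hv.le
  have h2 : Pd g s v / (2 * Real.sqrt (Pf g s v)) * Real.sqrt (Pf g s v) = Pd g s v / 2 := by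
    field_simp
  unfold Dgen
  rw [← neg_div]
  congr 1
  rw [hqq, h2]
  simp only [Nl, Nld, Nr, Nrd, Pf, Pd]
  ring

/-- For each fixed `v ∈ (0,1)`, the one-sided limits of `u ↦ ∂ρ*(u,v)/∂u` at `u = v`
exist and the left limit is the negative of the right limit. -/
theorem rhoStar_one_sided_derivs (g s : ℝ) (hg : 0 < g) (hs : 0 ≤ s)
    (v : ℝ) (hv0 : 0 < v) (hv1 : v < 1) :
    ∃ L : ℝ,
      Tendsto (fun u => deriv (fun u' => rhoStar g s u' v) u) (𝓝[<] v) (𝓝 L) ∧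
      Tendsto (fun u => deriv (fun u' => rhoStar g s u' v) u) (𝓝[>] v) (𝓝 (-L)) := by
  have hPv : 0 < Pf g s v := Pf_pos hg hs hv0 hv1
  have hContNl : Continuous (Nl g s v) := by unfold Nl; continuity
  have hContNld : Continuous (Nld g s v) := by unfold Nld; continuity
  have hContNr : Continuous (Nr g s v) := by unfold Nr; continuity
  have hContNrd : Continuous (Nrd g s v) := by unfold Nrd; continuity
  refine ⟨Dgen g s v (Nl g s v) (Nld g s v) v, ?_, ?_⟩
  · -- left limit
    have hev : (fun u => deriv (fun u' => rhoStar g s u' v) u)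
        =ᶠ[𝓝[<] v] Dgen g s v (Nl g s v) (Nld g s v) := by
      filter_upwards [Ioo_mem_nhdsLT_of_mem (show v ∈ Set.Ioc (0:ℝ) v from ⟨hv0, le_refl v⟩)]
        with u hu
      have hPu : 0 < Pf g s u := Pf_pos hg hs hu.1 (hu.2.trans hv1)
      have heq : (fun u' => rhoStar g s u' v)
          =ᶠ[𝓝 u] (fun u' => Nl g s v u' /
            (Real.sqrt (Pf g s u') * Real.sqrt (Pf g s v))) := by
        filter_upwards [Iio_mem_nhds hu.2] with w hw
        simp only [rhoStar, sigmaStar, Nl, Pf, min_eq_left (Set.mem_Iio.mp hw).le,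
          max_eq_right (Set.mem_Iio.mp hw).le]
      rw [heq.deriv_eq]
      exact (hasDerivAt_gen g s v hPu hPv (hasDerivAt_Nl g s v u)).deriv
    exact Tendsto.congr' hev.symm
      (((continuousAt_Dgen g s v hPv hContNl.continuousAt
        hContNld.continuousAt).tendsto).mono_left nhdsWithin_le_nhds)
  · -- right limit
    rw [← Dgen_neg g s v hPv]
    have hev : (fun u => deriv (fun u' => rhoStar g s u' v) u)
        =ᶠ[𝓝[>] v] Dgen g s v (Nr g s v) (Nrd g s v) := by
      filter_upwards [Ioo_mem_nhdsGT_of_mem (show v ∈ Set.Ico v (1:ℝ) from ⟨le_refl v, hv1⟩)]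
        with u hu
      have hPu : 0 < Pf g s u := Pf_pos hg hs (hv0.trans hu.1) hu.2
      have heq : (fun u' => rhoStar g s u' v)
          =ᶠ[𝓝 u] (fun u' => Nr g s v u' /
            (Real.sqrt (Pf g s u') * Real.sqrt (Pf g s v))) := by
        filter_upwards [Ioi_mem_nhds hu.1] with w hw
        simp only [rhoStar, sigmaStar, Nr, Pf, min_eq_right (Set.mem_Ioi.mp hw).le,
          max_eq_left (Set.mem_Ioi.mp hw).le]
      rw [heq.deriv_eq]
      exact (hasDerivAt_gen g s v hPu hPv (hasDerivAt_Nr g s v u)).deriv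
    exact Tendsto.congr' hev.symm
      (((continuousAt_Dgen g s v hPv hContNr.continuousAt
        hContNrd.continuousAt).tendsto).mono_left nhdsWithin_le_nhds)

end GraphCP
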